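/- The three functions J1 = H, J2 = p1 + p2 + p3, J3 = L1 + L2 + L3 are pairwise in involution: {Jr, Js} = 0 for all r, s ∈ {1,2,3}, where H is the coupled-oscillator Hamiltonian with magnetic terms. -/

import Mathlib

open scoped BigOperators

/-- Partial derivative of a function on phase space ℝ⁶ in the i-th coordinate. -/
noncomputable def pd (i : Fin 6) (f : (Fin 6 → ℝ) → ℝ) (x : Fin 6 → ℝ) : ℝ :=
  fderiv ℝ f x (Pi.single i 1)

/-- Canonical Poisson bracket on ℝ⁶ with coordinates (q1,q2,q3,p1,p2,p3). -/
noncomputable def pb (F G : (Fin 6 → ℝ) → ℝ) (x : Fin 6 → ℝ) : ℝ :=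
  (pd 0 F x * pd 3 G x - pd 3 F x * pd 0 G x) +
  (pd 1 F x * pd 4 G x - pd 4 F x * pd 1 G x) +
  (pd 2 F x * pd 5 G x - pd 5 F x * pd 2 G x)

/-- Angular momentum components: L1 = q2 p3 − q3 p2, etc. -/
def L1 (x : Fin 6 → ℝ) : ℝ := x 1 * x 5 - x 2 * x 4
def L2 (x : Fin 6 → ℝ) : ℝ := x 2 * x 3 - x 0 * x 5
def L3 (x : Fin 6 → ℝ) : ℝ := x 0 * x 4 - x 1 * x 3

/-- The Hamiltonian of the coupled oscillators with magnetic terms. -/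
noncomputable def Ham (b k : ℝ) (x : Fin 6 → ℝ) : ℝ :=
  (1/2) * (x 3 ^ 2 + x 4 ^ 2 + x 5 ^ 2) + b * (L1 x + L2 x + L3 x) +
  (1/2) * (b ^ 2 + k) * ((x 1 - x 0) ^ 2 + (x 2 - x 1) ^ 2 + (x 0 - x 2) ^ 2)

/-- J2 = p1 + p2 + p3. -/
def J2 (x : Fin 6 → ℝ) : ℝ := x 3 + x 4 + x 5

/-- J3 = L1 + L2 + L3. -/
def J3 (x : Fin 6 → ℝ) : ℝ := L1 x + L2 x + L3 x

def sing (i j : Fin 6) : ℝ := (Pi.single i (1:ℝ) : Fin 6 → ℝ) j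

lemma fderiv_coord' (j : Fin 6) (x : Fin 6 → ℝ) :
    fderiv ℝ (fun x : Fin 6 → ℝ => x j) x = (ContinuousLinearMap.proj j : (Fin 6 → ℝ) →L[ℝ] ℝ) :=
  (ContinuousLinearMap.proj j : (Fin 6 → ℝ) →L[ℝ] ℝ).fderiv

lemma pd_Ham (b k : ℝ) (i : Fin 6) (x : Fin 6 → ℝ) :
    pd i (Ham b k) x =
      (1/2) * (2 * x 3 * sing i 3 + 2 * x 4 * sing i 4 +
               2 * x 5 * sing i 5) +
      b * ((sing i 1 * x 5 + x 1 * sing i 5 -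
              (sing i 2 * x 4 + x 2 * sing i 4)) +
           (sing i 2 * x 3 + x 2 * sing i 3 -
              (sing i 0 * x 5 + x 0 * sing i 5)) +
           (sing i 0 * x 4 + x 0 * sing i 4 -
              (sing i 1 * x 3 + x 1 * sing i 3))) +
      (1/2) * (b ^ 2 + k) *
        (2 * (x 1 - x 0) * (sing i 1 - sing i 0) +
         2 * (x 2 - x 1) * (sing i 2 - sing i 1) +
         2 * (x 0 - x 2) * (sing i 0 - sing i 2)) := by
  simp only [pd]
  rw [show Ham b k = fun x : Fin 6 → ℝ =>
      (1/2) * (x 3 * x 3 + x 4 * x 4 + x 5 * x 5) +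
      b * ((x 1 * x 5 - x 2 * x 4) + (x 2 * x 3 - x 0 * x 5) + (x 0 * x 4 - x 1 * x 3)) +
      (1/2) * (b ^ 2 + k) * ((x 1 - x 0) * (x 1 - x 0) + (x 2 - x 1) * (x 2 - x 1) +
        (x 0 - x 2) * (x 0 - x 2)) by
    funext y; simp [Ham, L1, L2, L3]; ring]
  simp (disch := fun_prop) only [fderiv_fun_add, fderiv_fun_mul, fderiv_fun_sub, fderiv_const_mul,
    fderiv_coord', fderiv_fun_const, Pi.zero_apply, ContinuousLinearMap.zero_apply,
    ContinuousLinearMap.add_apply, ContinuousLinearMap.sub_apply,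
    ContinuousLinearMap.smul_apply, ContinuousLinearMap.coe_smul', Pi.smul_apply,
    ContinuousLinearMap.proj_apply, smul_eq_mul]
  simp only [sing]
  ring

lemma pd_J2 (i : Fin 6) (x : Fin 6 → ℝ) :
    pd i J2 x = sing i 3 + sing i 4 + sing i 5 := by
  simp only [pd]
  rw [show J2 = fun x : Fin 6 → ℝ => x 3 + x 4 + x 5 from rfl]
  simp (disch := fun_prop) only [fderiv_fun_add, fderiv_coord',
    ContinuousLinearMap.add_apply, ContinuousLinearMap.proj_apply]
  simp only [sing]

lemma pd_J3 (i : Fin 6) (x : Fin 6 → ℝ) :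
    pd i J3 x =
      (sing i 1 * x 5 + x 1 * sing i 5 -
         (sing i 2 * x 4 + x 2 * sing i 4)) +
      (sing i 2 * x 3 + x 2 * sing i 3 -
         (sing i 0 * x 5 + x 0 * sing i 5)) +
      (sing i 0 * x 4 + x 0 * sing i 4 -
         (sing i 1 * x 3 + x 1 * sing i 3)) := by
  simp only [pd]
  rw [show J3 = fun x : Fin 6 → ℝ =>
      (x 1 * x 5 - x 2 * x 4) + (x 2 * x 3 - x 0 * x 5) + (x 0 * x 4 - x 1 * x 3) from rfl]
  simp (disch := fun_prop) only [fderiv_fun_add, fderiv_fun_mul, fderiv_fun_sub, fderiv_coord',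
    ContinuousLinearMap.add_apply, ContinuousLinearMap.sub_apply,
    ContinuousLinearMap.smul_apply, ContinuousLinearMap.coe_smul', Pi.smul_apply,
    ContinuousLinearMap.proj_apply, smul_eq_mul]
  simp only [sing]
  ring

set_option maxHeartbeats 1000000 in
/-- J1 = H, J2, J3 are pairwise in involution. -/
theorem stmt2 (b k : ℝ) (x : Fin 6 → ℝ) :
    pb (Ham b k) (Ham b k) x = 0 ∧ pb (Ham b k) J2 x = 0 ∧ pb (Ham b k) J3 x = 0 ∧
    pb J2 (Ham b k) x = 0 ∧ pb J2 J2 x = 0 ∧ pb J2 J3 x = 0 ∧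
    pb J3 (Ham b k) x = 0 ∧ pb J3 J2 x = 0 ∧ pb J3 J3 x = 0 := by
  have hs : ∀ i j : Fin 6, sing i j = if j = i then 1 else 0 := fun i j => by
    simp [sing, Pi.single_apply]
  refine ⟨?_, ?_, ?_, ?_, ?_, ?_, ?_, ?_, ?_⟩ <;>
    · simp only [pb, pd_Ham, pd_J2, pd_J3, hs]
      simp only [Fin.isValue, show ((0:Fin 6) = 0) = True by simp,
        show ((1:Fin 6) = 0) = False by simp, show ((2:Fin 6) = 0) = False by simp,
        show ((3:Fin 6) = 0) = False by simp, show ((4:Fin 6) = 0) = False by simp,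
        show ((5:Fin 6) = 0) = False by simp, show ((0:Fin 6) = 1) = False by simp,
        show ((1:Fin 6) = 1) = True by simp, show ((2:Fin 6) = 1) = False by simp,
        show ((3:Fin 6) = 1) = False by simp, show ((4:Fin 6) = 1) = False by simp,
        show ((5:Fin 6) = 1) = False by simp, show ((0:Fin 6) = 2) = False by simp,
        show ((1:Fin 6) = 2) = False by simp, show ((2:Fin 6) = 2) = True by simp,
        show ((3:Fin 6) = 2) = False by simp, show ((4:Fin 6) = 2) = False by simp,
        show ((5:Fin 6) = 2) = False by simp, show ((0:Fin 6) = 3) = False by simp,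
        show ((1:Fin 6) = 3) = False by simp, show ((2:Fin 6) = 3) = False by simp,
        show ((3:Fin 6) = 3) = True by simp, show ((4:Fin 6) = 3) = False by simp,
        show ((5:Fin 6) = 3) = False by simp, show ((0:Fin 6) = 4) = False by simp,
        show ((1:Fin 6) = 4) = False by simp, show ((2:Fin 6) = 4) = False by simp,
        show ((3:Fin 6) = 4) = False by simp, show ((4:Fin 6) = 4) = True by simp,
        show ((5:Fin 6) = 4) = False by simp, show ((0:Fin 6) = 5) = False by simp,
        show ((1:Fin 6) = 5) = False by simp, show ((2:Fin 6) = 5) = False by simp,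
        show ((3:Fin 6) = 5) = False by simp, show ((4:Fin 6) = 5) = False by simp,
        show ((5:Fin 6) = 5) = True by simp, if_true, if_false]
      ring
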